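/- Let Λ be a Young diagram with n = |Λ| boxes, let x_1 < y_1 < x_2 < ⋯ < y_{d-1} < x_d be its interlacing corner-content sequences, and let λ be the Young diagram obtained from Λ by removing the removable box of content y_k. Then ∏_{b∈Λ} h_Λ(b) / ∏_{b∈λ} h_λ(b) = (x_d − y_k)(y_k − x_1) · ∏_{i=1}^{k-1} (y_k − x_{i+1})/(y_k − y_i) · ∏_{j=k+1}^{d-1} (y_k − x_j)/(y_k − y_j), where h_λ(b) and h_Λ(b) denote hook lengths taken in λ and Λ respectively. Equivalently, with f_λ = n!∏_{b∈λ} h_λ(b)^{-1}, one has f_λ/f_Λ = (x_d−y_k)(y_k−x_1)/n · ∏_{i=1}^{k-1}(y_k−x_{i+1})/(y_k−y_i) · ∏_{j=k+1}^{d-1}(y_k−x_j)/(y_k−y_j). -/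

import Mathlib

/-- The arm length `a(b) = λᵢ − j` of a box `b = (i,j)` (0-indexed). -/
def armLen (μ : YoungDiagram) (b : ℕ × ℕ) : ℕ := μ.rowLen b.1 - b.2 - 1

/-- The leg length `l(b) = λ′ⱼ − i` of a box `b = (i,j)` (0-indexed). -/
def legLen (μ : YoungDiagram) (b : ℕ × ℕ) : ℕ := μ.colLen b.2 - b.1 - 1

/-- The hook length `h(b) = a(b) + l(b) + 1`. -/
def hookLen (μ : YoungDiagram) (b : ℕ × ℕ) : ℕ := armLen μ b + legLen μ b + 1

/-- The hook expression `f_λ = |λ|! ∏_{b∈λ} h_λ(b)⁻¹`. -/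
noncomputable def hookDim (μ : YoungDiagram) : ℝ :=
  (Nat.factorial μ.card : ℝ) * ∏ b ∈ μ.cells, (hookLen μ b : ℝ)⁻¹

/-- A box `c ∉ μ` is addable if adjoining it to `μ` gives a Young diagram. -/
def Addable (μ : YoungDiagram) (c : ℕ × ℕ) : Prop :=
  c ∉ μ.cells ∧ ∃ ν : YoungDiagram, ν.cells = insert c μ.cells

/-- A box `c ∈ μ` is removable if deleting it from `μ` leaves a Young diagram. -/
def Removable (μ : YoungDiagram) (c : ℕ × ℕ) : Prop :=
  c ∈ μ.cells ∧ ∃ ν : YoungDiagram, ν.cells = μ.cells.erase c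

/-- The content `c(b) = j − i` of a box `b = (i,j)`, as a real number (0-indexed). -/
noncomputable def contentBox (b : ℕ × ℕ) : ℝ := (b.2 : ℝ) - (b.1 : ℝ)

open Finset

lemma removable_iff (μ : YoungDiagram) (i j : ℕ) :
    Removable μ (i, j) ↔ μ.colLen j = i + 1 ∧ μ.rowLen i = j + 1 := by
  constructor
  · rintro ⟨hmem, ν, hν⟩
    rw [YoungDiagram.mem_cells] at hmem
    have h1 : (i + 1, j) ∉ μ := by
      intro hc
      have h2 : (i + 1, j) ∈ ν.cells := by
        rw [hν, Finset.mem_erase]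
        exact ⟨by simp, hc⟩
      have h3 : (i, j) ∈ ν.cells :=
        ν.isLowerSet (by simp : ((i, j) : ℕ × ℕ) ≤ (i + 1, j)) h2
      rw [hν, Finset.mem_erase] at h3
      exact h3.1 rfl
    have h2 : (i, j + 1) ∉ μ := by
      intro hc
      have h2 : (i, j + 1) ∈ ν.cells := by
        rw [hν, Finset.mem_erase]
        exact ⟨by simp, hc⟩
      have h3 : (i, j) ∈ ν.cells :=
        ν.isLowerSet (by simp : ((i, j) : ℕ × ℕ) ≤ (i, j + 1)) h2
      rw [hν, Finset.mem_erase] at h3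
      exact h3.1 rfl
    rw [YoungDiagram.mem_iff_lt_colLen] at hmem h1
    rw [YoungDiagram.mem_iff_lt_rowLen] at h2
    constructor
    · omega
    · have := (YoungDiagram.mem_iff_lt_rowLen (μ := μ) (i := i) (j := j)).mp
        (by rw [YoungDiagram.mem_iff_lt_colLen]; omega)
      omega
  · rintro ⟨hc, hr⟩
    have hmem : (i, j) ∈ μ := by rw [YoungDiagram.mem_iff_lt_colLen]; omega
    refine ⟨hmem, ⟨μ.cells.erase (i, j), ?_⟩, rfl⟩
    intro p q hqp hp
    simp only [Finset.coe_erase, Set.mem_diff, Finset.mem_coe, YoungDiagram.mem_cells,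
      Set.mem_singleton_iff] at hp ⊢
    obtain ⟨hpμ, hpne⟩ := hp
    refine ⟨μ.isLowerSet hqp hpμ, ?_⟩
    rintro rfl
    obtain ⟨h1, h2⟩ := hqp
    have hgt : p.1 > i ∨ p.2 > j := by
      rcases Nat.lt_or_ge i p.1 with h | h
      · exact Or.inl h
      · right
        have he : p.1 = i := le_antisymm h h1
        rcases Nat.lt_or_ge j p.2 with h' | h'
        · exact h'
        · exact absurd (Prod.ext he (le_antisymm h' h2)) hpne
    rcases hgt with h | h
    · have : (i + 1, j) ∈ μ := μ.up_left_mem h h2 hpμ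
      rw [YoungDiagram.mem_iff_lt_colLen] at this; omega
    · have : (i, j + 1) ∈ μ := μ.up_left_mem h1 h hpμ
      rw [YoungDiagram.mem_iff_lt_rowLen] at this; omega

lemma addable_iff (μ : YoungDiagram) (i j : ℕ) :
    Addable μ (i, j) ↔ μ.colLen j = i ∧ μ.rowLen i = j := by
  constructor
  · rintro ⟨hmem, ν, hν⟩
    rw [YoungDiagram.mem_cells] at hmem
    have hilen : ¬ i < μ.colLen j := fun h =>
      hmem (by rwa [YoungDiagram.mem_iff_lt_colLen])
    have hjlen : ¬ j < μ.rowLen i := fun h =>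
      hmem (by rwa [YoungDiagram.mem_iff_lt_rowLen])
    have hile : μ.colLen j ≥ i := by
      rcases Nat.eq_zero_or_pos i with rfl | hi
      · omega
      · have h1 : (i, j) ∈ ν.cells := by rw [hν]; exact Finset.mem_insert_self _ _
        have h2 : (i - 1, j) ∈ ν.cells :=
          ν.isLowerSet (Prod.mk_le_mk.mpr ⟨by omega, le_rfl⟩) h1
        rw [hν, Finset.mem_insert] at h2
        rcases h2 with h2 | h2
        · exfalso; have := (Prod.mk.injEq ..).mp h2; omega
        · rw [YoungDiagram.mem_cells, YoungDiagram.mem_iff_lt_colLen] at h2; omega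
    have hjle : μ.rowLen i ≥ j := by
      rcases Nat.eq_zero_or_pos j with rfl | hj
      · omega
      · have h1 : (i, j) ∈ ν.cells := by rw [hν]; exact Finset.mem_insert_self _ _
        have h2 : (i, j - 1) ∈ ν.cells :=
          ν.isLowerSet (Prod.mk_le_mk.mpr ⟨le_rfl, by omega⟩) h1
        rw [hν, Finset.mem_insert] at h2
        rcases h2 with h2 | h2
        · exfalso; have := (Prod.mk.injEq ..).mp h2; omega
        · rw [YoungDiagram.mem_cells, YoungDiagram.mem_iff_lt_rowLen] at h2; omega
    omega
  · rintro ⟨hc, hr⟩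
    have hmem : (i, j) ∉ μ := by rw [YoungDiagram.mem_iff_lt_colLen]; omega
    refine ⟨by simpa using hmem, ⟨insert (i, j) μ.cells, ?_⟩, rfl⟩
    intro p q hqp hp
    simp only [Finset.coe_insert, Set.mem_insert_iff, Finset.mem_coe,
      YoungDiagram.mem_cells] at hp ⊢
    rcases hp with rfl | hpμ
    · rcases eq_or_ne q (i, j) with rfl | hne
      · exact Or.inl rfl
      · right
        obtain ⟨h1, h2⟩ := hqp
        have hlt : q.1 < i ∨ q.2 < j := by
          rcases Nat.lt_or_ge q.1 i with h | h
          · exact Or.inl h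
          · right
            have he : q.1 = i := le_antisymm h1 h
            rcases Nat.lt_or_ge q.2 j with h' | h'
            · exact h'
            · exact absurd (Prod.ext he (le_antisymm h2 h')) hne
        rcases hlt with h | h
        · have hm : (q.1, j) ∈ μ := by rw [YoungDiagram.mem_iff_lt_colLen]; omega
          exact μ.up_left_mem le_rfl h2 hm
        · have hm : (i, q.2) ∈ μ := by rw [YoungDiagram.mem_iff_lt_rowLen]; omega
          exact μ.up_left_mem h1 le_rfl hm
    · exact Or.inr (μ.isLowerSet hqp hpμ)

lemma telescope (g : ℕ → ℝ) (p : ℕ → Prop) [DecidablePred p] (c : ℕ)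
    (hstep : ∀ j < c, ¬ p j → g (j + 1) = g j - 1)
    (hne : ∀ j ≤ c, g j ≠ 0) (hne1 : ∀ j < c, g j - 1 ≠ 0) :
    (∏ j ∈ Finset.range c, g j / (g j - 1)) * g c
      = g 0 * ∏ j ∈ (Finset.range c).filter p, g (j + 1) / (g j - 1) := by
  induction c with
  | zero => simp
  | succ c ih =>
    have ih' := ih (fun j hj => hstep j (by omega)) (fun j hj => hne j (by omega))
      (fun j hj => hne1 j (by omega))
    rw [Finset.prod_range_succ]
    have hfilt : (Finset.range (c + 1)).filter p =
        if p c then insert c ((Finset.range c).filter p) else (Finset.range c).filter p := by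
      rw [Finset.range_add_one, Finset.filter_insert]
    by_cases hpc : p c
    · rw [hfilt, if_pos hpc, Finset.prod_insert (by simp)]
      have hgc := hne c (by omega)
      have : (∏ j ∈ Finset.range c, g j / (g j - 1)) * (g c / (g c - 1)) * g (c + 1)
          = ((∏ j ∈ Finset.range c, g j / (g j - 1)) * g c) * (g (c+1) / (g c - 1)) := by
        ring
      rw [this, ih']
      ring
    · rw [hfilt, if_neg hpc]
      have hg1 := hstep c (by omega) hpc
      have hgne := hne1 c (by omega)
      rw [hg1]
      have : (∏ j ∈ Finset.range c, g j / (g j - 1)) * (g c / (g c - 1)) * (g c - 1)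
          = ((∏ j ∈ Finset.range c, g j / (g j - 1)) * g c) * ((g c - 1) / (g c - 1)) := by
        ring
      rw [this, div_self hgne, mul_one, ih']

lemma rowLen_eq_of (μ : YoungDiagram) (i m : ℕ) (h1 : (i, m) ∉ μ)
    (h2 : m = 0 ∨ (i, m - 1) ∈ μ) : μ.rowLen i = m := by
  rw [YoungDiagram.mem_iff_lt_rowLen] at h1
  rcases h2 with rfl | h2
  · omega
  · rw [YoungDiagram.mem_iff_lt_rowLen] at h2; omega

lemma addable_col0 (μ : YoungDiagram) : Addable μ (μ.colLen 0, 0) := by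
  rw [addable_iff]
  refine ⟨rfl, rowLen_eq_of μ _ 0 ?_ (Or.inl rfl)⟩
  rw [YoungDiagram.mem_iff_lt_colLen]; omega

lemma addable_of_drop (μ : YoungDiagram) (j : ℕ) (h : μ.colLen (j + 1) < μ.colLen j) :
    Addable μ (μ.colLen (j + 1), j + 1) := by
  rw [addable_iff]
  refine ⟨rfl, rowLen_eq_of μ _ (j + 1) ?_ (Or.inr ?_)⟩
  · rw [YoungDiagram.mem_iff_lt_colLen]; omega
  · simp only [Nat.add_sub_cancel]
    rw [YoungDiagram.mem_iff_lt_colLen]; omega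

lemma removable_of_drop (μ : YoungDiagram) (j : ℕ) (h : μ.colLen (j + 1) < μ.colLen j) :
    Removable μ (μ.colLen j - 1, j) := by
  rw [removable_iff]
  constructor
  · omega
  · apply rowLen_eq_of μ _ (j + 1)
    · rw [YoungDiagram.mem_iff_lt_colLen]; omega
    · refine Or.inr ?_
      simp only [Nat.add_sub_cancel]
      rw [YoungDiagram.mem_iff_lt_colLen]; omega

lemma addable_struct (μ : YoungDiagram) (cb : ℕ × ℕ) (h : Addable μ cb) :
    cb.1 = μ.colLen cb.2 ∧ (cb.2 = 0 ∨ μ.colLen cb.2 < μ.colLen (cb.2 - 1)) := by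
  obtain ⟨i, j⟩ := cb
  rw [addable_iff] at h
  obtain ⟨h1, h2⟩ := h
  refine ⟨h1.symm, ?_⟩
  rcases Nat.eq_zero_or_pos j with rfl | hj
  · exact Or.inl rfl
  · refine Or.inr ?_
    have : (i, j - 1) ∈ μ := by rw [YoungDiagram.mem_iff_lt_rowLen]; omega
    rw [YoungDiagram.mem_iff_lt_colLen] at this
    simpa [h1] using this

lemma removable_struct (μ : YoungDiagram) (rb : ℕ × ℕ) (h : Removable μ rb) :
    rb.1 + 1 = μ.colLen rb.2 ∧ μ.colLen (rb.2 + 1) < μ.colLen rb.2 := by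
  obtain ⟨i, j⟩ := rb
  dsimp only
  rw [removable_iff] at h
  obtain ⟨h1, h2⟩ := h
  refine ⟨h1.symm, ?_⟩
  have : (i, j + 1) ∉ μ := by rw [YoungDiagram.mem_iff_lt_rowLen]; omega
  rw [YoungDiagram.mem_iff_lt_colLen] at this
  omega

lemma mono_of_step (f : ℕ → ℝ) (lo hi : ℕ) (h : ∀ m, lo ≤ m → m < hi → f m < f (m + 1)) :
    ∀ a b, lo ≤ a → a < b → b ≤ hi → f a < f b := by
  intro a b ha hab hb
  induction b with
  | zero => omega
  | succ b ih =>
    rcases Nat.lt_or_ge a b with h' | h'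
    · exact lt_trans (ih h' (by omega)) (h b (by omega) (by omega))
    · have : a = b := by omega
      subst this
      exact h a ha (by omega)

noncomputable def gfun (μ : YoungDiagram) (r c j : ℕ) : ℝ := (c : ℝ) - r - j + μ.colLen j

def dropSet (μ : YoungDiagram) (c : ℕ) : Finset ℕ :=
  (Finset.range c).filter (fun j => μ.colLen (j + 1) < μ.colLen j)

lemma row_lemma (μ : YoungDiagram) (r c : ℕ)
    (hrow : μ.rowLen r = c + 1) (hcol : μ.colLen c = r + 1)
    (d k : ℕ) (hk1 : 1 ≤ k) (hk2 : k ≤ d - 1)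
    (x y : ℕ → ℝ)
    (hinter : ∀ m, 1 ≤ m → m ≤ d - 1 → x m < y m ∧ y m < x (m + 1))
    (hx1 : ∀ m, 1 ≤ m → m ≤ d → ∃ cb, Addable μ cb ∧ contentBox cb = x m)
    (hx2 : ∀ cb, Addable μ cb → ∃ m, 1 ≤ m ∧ m ≤ d ∧ contentBox cb = x m)
    (hy1 : ∀ m, 1 ≤ m → m ≤ d - 1 → ∃ cb, Removable μ cb ∧ contentBox cb = y m)
    (hy2 : ∀ cb, Removable μ cb → ∃ m, 1 ≤ m ∧ m ≤ d - 1 ∧ contentBox cb = y m)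
    (hyk : y k = (c : ℝ) - r) :
    ∏ j ∈ Finset.range c, ((hookLen μ (r, j) : ℝ) / ((hookLen μ (r, j) : ℝ) - 1))
      = (∏ i ∈ Finset.Icc 1 k, (y k - x i)) / ∏ i ∈ Finset.Icc 1 (k - 1), (y k - y i) := by
  have hd2 : 2 ≤ d := by omega
  -- monotonicity facts
  have hxmono : ∀ a b, 1 ≤ a → a < b → b ≤ d → x a < x b := by
    apply mono_of_step x 1 d
    intro m hm1 hm2
    have h := hinter m hm1 (by omega)
    linarith
  have hymono : ∀ a b, 1 ≤ a → a < b → b ≤ d - 1 → y a < y b := by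
    apply mono_of_step y 1 (d - 1)
    intro m hm1 hm2
    have h1 := hinter m hm1 (by omega)
    have h2 := hinter (m + 1) (by omega) (by omega)
    linarith
  have hxlek : ∀ i, 1 ≤ i → i ≤ k → x i < y k := by
    intro i h1 h2
    have hk := (hinter k hk1 hk2).1
    rcases eq_or_lt_of_le h2 with rfl | h
    · exact hk
    · exact lt_trans (hxmono i k h1 h (by omega)) hk
  have hxgtk : ∀ i, k < i → i ≤ d → y k < x i := by
    intro i h1 h2
    have hk := (hinter k hk1 hk2).2
    rcases eq_or_lt_of_le (show k + 1 ≤ i by omega) with rfl | h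
    · exact hk
    · exact lt_trans hk (hxmono (k + 1) i (by omega) h h2)
  have hylek : ∀ i, 1 ≤ i → i < k → y i < y k := fun i h1 h2 => hymono i k h1 h2 hk2
  have hygek : ∀ i, k ≤ i → i ≤ d - 1 → y k ≤ y i := by
    intro i h1 h2
    rcases eq_or_lt_of_le h1 with rfl | h
    · exact le_refl _
    · exact le_of_lt (hymono k i hk1 h h2)
  -- geometry facts
  have hcolmono : ∀ j ≤ c, r + 1 ≤ μ.colLen j := by
    intro j hj
    have := μ.colLen_anti j c hj
    omega
  have hcafter : ∀ j, c < j → μ.colLen j ≤ r := by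
    intro j hj
    have h1 : (r, c + 1) ∉ μ := by rw [YoungDiagram.mem_iff_lt_rowLen]; omega
    rw [YoungDiagram.mem_iff_lt_colLen] at h1
    have := μ.colLen_anti (c + 1) j (by omega)
    omega
  have hgc : gfun μ r c c = 1 := by
    simp only [gfun, hcol]
    push_cast
    ring
  have hglb : ∀ j ≤ c, (c : ℝ) - j + 1 ≤ gfun μ r c j := by
    intro j hj
    have h1 : ((r : ℝ) + 1) ≤ (μ.colLen j : ℝ) := by exact_mod_cast hcolmono j hj
    simp only [gfun]
    linarith
  have hne : ∀ j ≤ c, gfun μ r c j ≠ 0 := by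
    intro j hj
    have h1 := hglb j hj
    have h2 : (j : ℝ) ≤ c := by exact_mod_cast hj
    have : (0 : ℝ) < gfun μ r c j := by linarith
    exact ne_of_gt this
  have hne1 : ∀ j < c, gfun μ r c j - 1 ≠ 0 := by
    intro j hj
    have h1 := hglb j (by omega)
    have h2 : (j : ℝ) + 1 ≤ c := by exact_mod_cast hj
    have : (0 : ℝ) < gfun μ r c j - 1 := by linarith
    exact ne_of_gt this
  have hstep : ∀ j < c, ¬(μ.colLen (j + 1) < μ.colLen j) → gfun μ r c (j + 1) = gfun μ r c j - 1 := by
    intro j hj hnd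
    have heq : μ.colLen (j + 1) = μ.colLen j := by
      have := μ.colLen_anti j (j + 1) (by omega)
      omega
    simp only [gfun, heq]
    push_cast
    ring
  have hhook : ∀ j < c, (hookLen μ (r, j) : ℝ) = gfun μ r c j := by
    intro j hj
    have h1 := hcolmono j (by omega)
    have hnat : hookLen μ (r, j) + r + j = c + μ.colLen j := by
      simp only [hookLen, armLen, legLen]
      omega
    have hc := congrArg (Nat.cast : ℕ → ℝ) hnat
    push_cast at hc
    simp only [gfun]
    linarith
  have htel := telescope (gfun μ r c) (fun j => μ.colLen (j + 1) < μ.colLen j) c hstep hne hne1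
  rw [hgc, mul_one] at htel
  rw [show (Finset.range c).filter (fun j => μ.colLen (j + 1) < μ.colLen j) = dropSet μ c
    from rfl] at htel
  have hL : ∏ j ∈ Finset.range c, ((hookLen μ (r, j) : ℝ) / ((hookLen μ (r, j) : ℝ) - 1))
      = ∏ j ∈ Finset.range c, gfun μ r c j / (gfun μ r c j - 1) :=
    Finset.prod_congr rfl (fun j hj => by rw [hhook j (Finset.mem_range.mp hj)])
  -- the content functions
  set φ : ℕ → ℝ := fun j => (j : ℝ) - μ.colLen j with hφ
  set ψ : ℕ → ℝ := fun j => (j : ℝ) + 1 - μ.colLen j with hψ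
  have hφmono : ∀ a b : ℕ, a < b → φ a < φ b := by
    intro a b hab
    have h1 : (μ.colLen b : ℝ) ≤ μ.colLen a := by exact_mod_cast μ.colLen_anti a b (le_of_lt hab)
    have h2 : (a : ℝ) < b := by exact_mod_cast hab
    simp only [hφ]
    linarith
  have hψmono : ∀ a b : ℕ, a < b → ψ a < ψ b := by
    intro a b hab
    have h1 : (μ.colLen b : ℝ) ≤ μ.colLen a := by exact_mod_cast μ.colLen_anti a b (le_of_lt hab)
    have h2 : (a : ℝ) < b := by exact_mod_cast hab
    simp only [hψ]
    linarith
  set N : Finset ℕ := insert 0 ((dropSet μ c).image (· + 1)) with hN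
  have hmemD : ∀ j, j ∈ dropSet μ c ↔ j < c ∧ μ.colLen (j + 1) < μ.colLen j := by
    intro j
    simp [dropSet]
  have hNc : ∀ j ∈ N, j ≤ c := by
    intro j hj
    rw [hN, Finset.mem_insert] at hj
    rcases hj with rfl | hj
    · omega
    · rw [Finset.mem_image] at hj
      obtain ⟨j', hj', rfl⟩ := hj
      rw [hmemD] at hj'
      omega
  -- the numerator set identity
  have himg : (Finset.Icc 1 k).image x = N.image φ := by
    apply Finset.Subset.antisymm
    · intro t ht
      rw [Finset.mem_image] at ht
      obtain ⟨i, hi, rfl⟩ := ht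
      rw [Finset.mem_Icc] at hi
      obtain ⟨cb, hadd, hcont⟩ := hx1 i hi.1 (by omega)
      obtain ⟨hc1, hc2⟩ := addable_struct μ cb hadd
      have hxilt : x i < y k := hxlek i hi.1 hi.2
      have hcb2 : cb.2 ≤ c := by
        by_contra hcc
        push_neg at hcc
        have h1 : μ.colLen cb.2 ≤ r := hcafter cb.2 hcc
        have h2 : (μ.colLen cb.2 : ℝ) ≤ r := by exact_mod_cast h1
        have h3 : (c : ℝ) + 1 ≤ cb.2 := by exact_mod_cast hcc
        have h4 : contentBox cb = (cb.2 : ℝ) - μ.colLen cb.2 := by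
          simp only [contentBox, hc1]
        rw [hcont] at h4 -- x i = cb.2 - colLen cb.2
        rw [hyk] at hxilt
        linarith
      rw [Finset.mem_image]
      rcases Nat.eq_zero_or_pos cb.2 with h0 | hpos
      · refine ⟨0, by simp [hN], ?_⟩
        simp only [hφ]
        rw [← hcont]
        simp [contentBox, hc1, h0]
      · rcases hc2 with h0 | hdrop
        · omega
        · refine ⟨cb.2, ?_, ?_⟩
          · rw [hN, Finset.mem_insert, Finset.mem_image]
            right
            refine ⟨cb.2 - 1, ?_, by omega⟩
            rw [hmemD]
            constructor
            · omega
            · have : cb.2 - 1 + 1 = cb.2 := by omega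
              rw [this]
              exact hdrop
          · simp only [hφ]
            rw [← hcont]
            simp only [contentBox, hc1]
    · intro t ht
      rw [Finset.mem_image] at ht
      obtain ⟨j, hjN, rfl⟩ := ht
      have hjc := hNc j hjN
      -- there is an addable box with content φ j
      have hbox : ∃ cb, Addable μ cb ∧ contentBox cb = φ j := by
        rw [hN, Finset.mem_insert] at hjN
        rcases hjN with rfl | hjN
        · refine ⟨(μ.colLen 0, 0), addable_col0 μ, ?_⟩
          simp [contentBox, hφ]
        · rw [Finset.mem_image] at hjN
          obtain ⟨j', hj', rfl⟩ := hjN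
          rw [hmemD] at hj'
          refine ⟨(μ.colLen (j' + 1), j' + 1), addable_of_drop μ j' hj'.2, ?_⟩
          simp [contentBox, hφ]
      obtain ⟨cb, hadd, hcont⟩ := hbox
      obtain ⟨m, hm1, hmd, hcm⟩ := hx2 cb hadd
      have hφlt : φ j < y k := by
        have h1 : r + 1 ≤ μ.colLen j := hcolmono j hjc
        have h2 : ((r : ℝ) + 1) ≤ μ.colLen j := by exact_mod_cast h1
        have h3 : (j : ℝ) ≤ c := by exact_mod_cast hjc
        rw [hyk]
        simp only [hφ]
        linarith
      have hmk : m ≤ k := by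
        by_contra hmk
        push_neg at hmk
        have := hxgtk m hmk hmd
        rw [← hcm, hcont] at this
        linarith
      rw [Finset.mem_image]
      exact ⟨m, Finset.mem_Icc.mpr ⟨hm1, hmk⟩, by rw [← hcm, hcont]⟩
  -- the denominator set identity
  have himgy : (Finset.Icc 1 (k - 1)).image y = (dropSet μ c).image ψ := by
    apply Finset.Subset.antisymm
    · intro t ht
      rw [Finset.mem_image] at ht
      obtain ⟨i, hi, rfl⟩ := ht
      rw [Finset.mem_Icc] at hi
      obtain ⟨rb, hrem, hcont⟩ := hy1 i hi.1 (by omega)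
      obtain ⟨hr1, hr2⟩ := removable_struct μ rb hrem
      have hyilt : y i < y k := hylek i hi.1 (by omega)
      have hrb2 : rb.2 < c := by
        by_contra hcc
        push_neg at hcc
        rcases eq_or_lt_of_le hcc with heq | hlt
        · -- rb.2 = c, so rb = b0 and content = y k
          have : rb.1 = r := by rw [← heq] at hr1; omega
          have hc2 : contentBox rb = (c : ℝ) - r := by
            simp only [contentBox, this, ← heq]
          rw [hcont, ← hyk] at hc2
          linarith
        · have h1 : μ.colLen rb.2 ≤ r := hcafter rb.2 hlt
          have h2 : (rb.1 : ℝ) + 1 = μ.colLen rb.2 := by exact_mod_cast hr1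
          have h3 : (μ.colLen rb.2 : ℝ) ≤ r := by exact_mod_cast h1
          have h4 : (c : ℝ) + 1 ≤ rb.2 := by exact_mod_cast hlt
          have h5 : contentBox rb = (rb.2 : ℝ) - rb.1 := rfl
          rw [hcont] at h5
          rw [hyk] at hyilt
          linarith
      rw [Finset.mem_image]
      refine ⟨rb.2, ?_, ?_⟩
      · rw [hmemD]
        exact ⟨hrb2, hr2⟩
      · simp only [hψ]
        have h2 : (rb.1 : ℝ) + 1 = μ.colLen rb.2 := by exact_mod_cast hr1
        rw [← hcont]
        simp only [contentBox]
        linarith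
    · intro t ht
      rw [Finset.mem_image] at ht
      obtain ⟨j, hj, rfl⟩ := ht
      rw [hmemD] at hj
      have hrem := removable_of_drop μ j hj.2
      obtain ⟨m, hm1, hmd, hcm⟩ := hy2 _ hrem
      have hcont : contentBox (μ.colLen j - 1, j) = ψ j := by
        have hpos : 1 ≤ μ.colLen j := by omega
        simp only [contentBox, hψ]
        have : ((μ.colLen j - 1 : ℕ) : ℝ) = (μ.colLen j : ℝ) - 1 := by
          push_cast [Nat.cast_sub hpos]
          ring
        rw [this]
        ring
      have hψlt : ψ j < y k := by
        have h1 : r + 1 ≤ μ.colLen j := hcolmono j (by omega)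
        have h2 : ((r : ℝ) + 1) ≤ μ.colLen j := by exact_mod_cast h1
        have h3 : (j : ℝ) + 1 ≤ c := by exact_mod_cast hj.1
        rw [hyk]
        simp only [hψ]
        linarith
      have hmk : m ≤ k - 1 := by
        by_contra hmk
        push_neg at hmk
        have := hygek m (by omega) hmd
        rw [← hcm, hcont] at this
        linarith
      rw [Finset.mem_image]
      exact ⟨m, Finset.mem_Icc.mpr ⟨hm1, hmk⟩, by rw [← hcm, hcont]⟩
  -- transporting the products
  have hxinj : ∀ a ∈ Finset.Icc 1 k, ∀ b ∈ Finset.Icc 1 k, x a = x b → a = b := by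
    intro a ha b hb hab
    rw [Finset.mem_Icc] at ha hb
    by_contra hne'
    rcases Nat.lt_or_ge a b with h | h
    · have := hxmono a b ha.1 h (by omega); linarith
    · have hlt : b < a := by omega
      have := hxmono b a hb.1 hlt (by omega); linarith
  have hyinj : ∀ a ∈ Finset.Icc 1 (k - 1), ∀ b ∈ Finset.Icc 1 (k - 1), y a = y b → a = b := by
    intro a ha b hb hab
    rw [Finset.mem_Icc] at ha hb
    by_contra hne'
    rcases Nat.lt_or_ge a b with h | h
    · have := hymono a b ha.1 h (by omega); linarith
    · have hlt : b < a := by omega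
      have := hymono b a hb.1 hlt (by omega); linarith
  have hφinj : ∀ a ∈ N, ∀ b ∈ N, φ a = φ b → a = b := by
    intro a _ b _ hab
    by_contra hne'
    rcases Nat.lt_or_ge a b with h | h
    · have := hφmono a b h; linarith
    · have hlt : b < a := by omega
      have := hφmono b a hlt; linarith
  have hψinj : ∀ a ∈ dropSet μ c, ∀ b ∈ dropSet μ c, ψ a = ψ b → a = b := by
    intro a _ b _ hab
    by_contra hne'
    rcases Nat.lt_or_ge a b with h | h
    · have := hψmono a b h; linarith
    · have hlt : b < a := by omega
      have := hψmono b a hlt; linarith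
  have hnum : ∏ i ∈ Finset.Icc 1 k, (y k - x i)
      = gfun μ r c 0 * ∏ j ∈ dropSet μ c, gfun μ r c (j + 1) := by
    calc ∏ i ∈ Finset.Icc 1 k, (y k - x i)
        = ∏ t ∈ (Finset.Icc 1 k).image x, (y k - t) := (Finset.prod_image hxinj).symm
      _ = ∏ t ∈ N.image φ, (y k - t) := by rw [himg]
      _ = ∏ j ∈ N, (y k - φ j) := Finset.prod_image hφinj
      _ = ∏ j ∈ N, gfun μ r c j := by
          refine Finset.prod_congr rfl (fun j hj => ?_)
          simp only [hφ, gfun, hyk]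
          ring
      _ = gfun μ r c 0 * ∏ j ∈ (dropSet μ c).image (· + 1), gfun μ r c j := by
          rw [hN, Finset.prod_insert (by simp)]
      _ = gfun μ r c 0 * ∏ j ∈ dropSet μ c, gfun μ r c (j + 1) := by
          rw [Finset.prod_image (by intro a _ b _ h; exact Nat.add_right_cancel h)]
  have hden : ∏ i ∈ Finset.Icc 1 (k - 1), (y k - y i)
      = ∏ j ∈ dropSet μ c, (gfun μ r c j - 1) := by
    calc ∏ i ∈ Finset.Icc 1 (k - 1), (y k - y i)
        = ∏ t ∈ (Finset.Icc 1 (k - 1)).image y, (y k - t) := (Finset.prod_image hyinj).symm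
      _ = ∏ t ∈ (dropSet μ c).image ψ, (y k - t) := by rw [himgy]
      _ = ∏ j ∈ dropSet μ c, (y k - ψ j) := Finset.prod_image hψinj
      _ = ∏ j ∈ dropSet μ c, (gfun μ r c j - 1) := by
          refine Finset.prod_congr rfl (fun j hj => ?_)
          simp only [hψ, gfun, hyk]
          ring
  rw [hL, htel, hnum, hden]
  rw [Finset.prod_div_distrib]
  ring

lemma addable_transpose (μ : YoungDiagram) (cb : ℕ × ℕ) :
    Addable μ.transpose cb ↔ Addable μ cb.swap := by
  obtain ⟨i, j⟩ := cb
  rw [addable_iff, addable_iff]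
  rw [YoungDiagram.rowLen_transpose, YoungDiagram.colLen_transpose]
  exact and_comm

lemma removable_transpose (μ : YoungDiagram) (cb : ℕ × ℕ) :
    Removable μ.transpose cb ↔ Removable μ cb.swap := by
  obtain ⟨i, j⟩ := cb
  rw [removable_iff, removable_iff]
  rw [YoungDiagram.rowLen_transpose, YoungDiagram.colLen_transpose]
  exact and_comm

lemma contentBox_swap (cb : ℕ × ℕ) : contentBox cb.swap = - contentBox cb := by
  simp [contentBox, Prod.swap]

lemma hookLen_transpose (μ : YoungDiagram) (i j : ℕ) :
    hookLen μ.transpose (j, i) = hookLen μ (i, j) := by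
  simp [hookLen, armLen, legLen, YoungDiagram.rowLen_transpose, YoungDiagram.colLen_transpose]
  omega

lemma colLen_eq_of (μ : YoungDiagram) (j m : ℕ) (h1 : (m, j) ∉ μ)
    (h2 : m = 0 ∨ (m - 1, j) ∈ μ) : μ.colLen j = m := by
  rw [YoungDiagram.mem_iff_lt_colLen] at h1
  rcases h2 with rfl | h2
  · omega
  · rw [YoungDiagram.mem_iff_lt_colLen] at h2; omega

lemma col_lemma (μ : YoungDiagram) (r c : ℕ)
    (hrow : μ.rowLen r = c + 1) (hcol : μ.colLen c = r + 1)
    (d k : ℕ) (hk1 : 1 ≤ k) (hk2 : k ≤ d - 1)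
    (x y : ℕ → ℝ)
    (hinter : ∀ m, 1 ≤ m → m ≤ d - 1 → x m < y m ∧ y m < x (m + 1))
    (hx1 : ∀ m, 1 ≤ m → m ≤ d → ∃ cb, Addable μ cb ∧ contentBox cb = x m)
    (hx2 : ∀ cb, Addable μ cb → ∃ m, 1 ≤ m ∧ m ≤ d ∧ contentBox cb = x m)
    (hy1 : ∀ m, 1 ≤ m → m ≤ d - 1 → ∃ cb, Removable μ cb ∧ contentBox cb = y m)
    (hy2 : ∀ cb, Removable μ cb → ∃ m, 1 ≤ m ∧ m ≤ d - 1 ∧ contentBox cb = y m)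
    (hyk : y k = (c : ℝ) - r) :
    ∏ i ∈ Finset.range r, ((hookLen μ (i, c) : ℝ) / ((hookLen μ (i, c) : ℝ) - 1))
      = (∏ i ∈ Finset.Icc (k + 1) d, (x i - y k)) / ∏ i ∈ Finset.Icc (k + 1) (d - 1), (y i - y k) := by
  have hd2 : 2 ≤ d := by omega
  set x' : ℕ → ℝ := fun m => - x (d + 1 - m) with hx'
  set y' : ℕ → ℝ := fun m => - y (d - m) with hy'
  have hinter' : ∀ m, 1 ≤ m → m ≤ d - 1 → x' m < y' m ∧ y' m < x' (m + 1) := by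
    intro m hm1 hm2
    have hidx1 : d + 1 - m = (d - m) + 1 := by omega
    have hidx2 : d + 1 - (m + 1) = d - m := by omega
    have h := hinter (d - m) (by omega) (by omega)
    constructor
    · simp only [hx', hy', hidx1]
      linarith [h.2]
    · simp only [hx', hy', hidx2]
      linarith [h.1]
  have hx1' : ∀ m, 1 ≤ m → m ≤ d → ∃ cb, Addable μ.transpose cb ∧ contentBox cb = x' m := by
    intro m hm1 hm2
    obtain ⟨cb, hadd, hcont⟩ := hx1 (d + 1 - m) (by omega) (by omega)
    refine ⟨cb.swap, ?_, ?_⟩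
    · rw [addable_transpose, Prod.swap_swap]
      exact hadd
    · rw [contentBox_swap, hcont]
  have hx2' : ∀ cb, Addable μ.transpose cb → ∃ m, 1 ≤ m ∧ m ≤ d ∧ contentBox cb = x' m := by
    intro cb hadd
    rw [addable_transpose] at hadd
    obtain ⟨m, hm1, hm2, hcont⟩ := hx2 cb.swap hadd
    refine ⟨d + 1 - m, by omega, by omega, ?_⟩
    have hidx : d + 1 - (d + 1 - m) = m := by omega
    simp only [hx', hidx]
    rw [contentBox_swap] at hcont
    linarith
  have hy1' : ∀ m, 1 ≤ m → m ≤ d - 1 → ∃ cb, Removable μ.transpose cb ∧ contentBox cb = y' m := by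
    intro m hm1 hm2
    obtain ⟨cb, hrem, hcont⟩ := hy1 (d - m) (by omega) (by omega)
    refine ⟨cb.swap, ?_, ?_⟩
    · rw [removable_transpose, Prod.swap_swap]
      exact hrem
    · rw [contentBox_swap, hcont]
  have hy2' : ∀ cb, Removable μ.transpose cb → ∃ m, 1 ≤ m ∧ m ≤ d - 1 ∧ contentBox cb = y' m := by
    intro cb hrem
    rw [removable_transpose] at hrem
    obtain ⟨m, hm1, hm2, hcont⟩ := hy2 cb.swap hrem
    refine ⟨d - m, by omega, by omega, ?_⟩
    have hidx : d - (d - m) = m := by omega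
    simp only [hy', hidx]
    rw [contentBox_swap] at hcont
    linarith
  have hyk' : y' (d - k) = ((r : ℝ)) - c := by
    have hidx : d - (d - k) = k := by omega
    simp only [hy', hidx, hyk]
    ring
  have P := row_lemma μ.transpose c r
    (by rw [YoungDiagram.rowLen_transpose]; exact hcol)
    (by rw [YoungDiagram.colLen_transpose]; exact hrow)
    d (d - k) (by omega) (by omega) x' y' hinter' hx1' hx2' hy1' hy2' hyk'
  have hLkey : ∀ i : ℕ, (hookLen μ.transpose (c, i) : ℝ) = (hookLen μ (i, c) : ℝ) := by
    intro i
    rw [hookLen_transpose]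
  rw [show (∏ j ∈ Finset.range r,
      ((hookLen μ.transpose (c, j) : ℝ) / ((hookLen μ.transpose (c, j) : ℝ) - 1)))
      = ∏ i ∈ Finset.range r, ((hookLen μ (i, c) : ℝ) / ((hookLen μ (i, c) : ℝ) - 1)) from
    Finset.prod_congr rfl (fun j _ => by rw [hLkey])] at P
  rw [P]
  congr 1
  · -- numerator
    refine Finset.prod_nbij' (fun m => d + 1 - m) (fun m => d + 1 - m) ?_ ?_ ?_ ?_ ?_ <;>
        intro a ha <;> rw [Finset.mem_Icc] at ha
    · rw [Finset.mem_Icc]; omega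
    · rw [Finset.mem_Icc]; omega
    · omega
    · omega
    · simp only [hx', hy', show d - (d - k) = k from by omega]
      ring
  · -- denominator
    refine Finset.prod_nbij' (fun m => d - m) (fun m => d - m) ?_ ?_ ?_ ?_ ?_ <;>
        intro a ha <;> rw [Finset.mem_Icc] at ha
    · rw [Finset.mem_Icc]; omega
    · rw [Finset.mem_Icc]; omega
    · omega
    · omega
    · simp only [hy', show d - (d - k) = k from by omega]
      ring


/-- For `λ` obtained from `Λ` (with `n = |Λ|`) by removing the removable box of content `y_k`:
`∏_{b∈Λ} h_Λ(b) / ∏_{b∈λ} h_λ(b)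
  = (x_d − y_k)(y_k − x_1) ∏_{i=1}^{k-1} (y_k−x_{i+1})/(y_k−y_i) ∏_{j=k+1}^{d-1} (y_k−x_j)/(y_k−y_j)`,
and equivalently, with `f_λ = |λ|! ∏_{b∈λ} h_λ(b)⁻¹`,
`f_λ/f_Λ = (x_d−y_k)(y_k−x_1)/n · ∏_{i=1}^{k-1} (y_k−x_{i+1})/(y_k−y_i) ∏_{j=k+1}^{d-1} (y_k−x_j)/(y_k−y_j)`,
where `x₁ < y₁ < ⋯ < y_{d−1} < x_d` are the interlacing corner-content sequences of `Λ`. -/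

theorem hook_ratio_eq_analytic_cotransition (Λ lam : YoungDiagram)
    (n : ℕ) (hn : n = Λ.card)
    (d k : ℕ) (hd : 1 ≤ d) (hk1 : 1 ≤ k) (hk2 : k ≤ d - 1)
    (x y : ℕ → ℝ)
    -- the sequences interlace: x₁ < y₁ < x₂ < ⋯ < y_{d-1} < x_d
    (hinter : ∀ m, 1 ≤ m → m ≤ d - 1 → x m < y m ∧ y m < x (m + 1))
    -- x₁,…,x_d are exactly the contents of the addable boxes of Λ
    (hx1 : ∀ m, 1 ≤ m → m ≤ d → ∃ c, Addable Λ c ∧ contentBox c = x m)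
    (hx2 : ∀ c, Addable Λ c → ∃ m, 1 ≤ m ∧ m ≤ d ∧ contentBox c = x m)
    -- y₁,…,y_{d-1} are exactly the contents of the removable boxes of Λ
    (hy1 : ∀ m, 1 ≤ m → m ≤ d - 1 → ∃ c, Removable Λ c ∧ contentBox c = y m)
    (hy2 : ∀ c, Removable Λ c → ∃ m, 1 ≤ m ∧ m ≤ d - 1 ∧ contentBox c = y m)
    -- λ is obtained from Λ by removing the removable box of content y k
    (b0 : ℕ × ℕ) (hb0 : Removable Λ b0) (hb0y : contentBox b0 = y k)
    (hlam : lam.cells = Λ.cells.erase b0) :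
    ((∏ b ∈ Λ.cells, (hookLen Λ b : ℝ)) / ∏ b ∈ lam.cells, (hookLen lam b : ℝ) =
      (x d - y k) * (y k - x 1) *
        (∏ i ∈ Finset.Icc 1 (k - 1), (y k - x (i + 1)) / (y k - y i)) *
        ∏ j ∈ Finset.Icc (k + 1) (d - 1), (y k - x j) / (y k - y j)) ∧
    (hookDim lam / hookDim Λ =
      (x d - y k) * (y k - x 1) / (n : ℝ) *
        (∏ i ∈ Finset.Icc 1 (k - 1), (y k - x (i + 1)) / (y k - y i)) *
        ∏ j ∈ Finset.Icc (k + 1) (d - 1), (y k - x j) / (y k - y j)) := by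
  obtain ⟨r, c⟩ := b0
  have hrc := (removable_iff Λ r c).mp hb0
  obtain ⟨hcol, hrow⟩ := hrc
  have hmemb0 : (r, c) ∈ Λ.cells := hb0.1
  have hyk : y k = (c : ℝ) - r := by rw [← hb0y]; rfl
  have hd2 : 2 ≤ d := by omega
  -- lengths of lam
  have hmemlam : ∀ p : ℕ × ℕ, p ∈ lam.cells ↔ (p ∈ Λ.cells ∧ p ≠ (r, c)) := by
    intro p
    rw [hlam, Finset.mem_erase]
    tauto
  have hlr : lam.rowLen r = c := by
    apply rowLen_eq_of
    · rw [← YoungDiagram.mem_cells, hmemlam]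
      tauto
    · rcases Nat.eq_zero_or_pos c with rfl | hc
      · exact Or.inl rfl
      · refine Or.inr ?_
        rw [← YoungDiagram.mem_cells, hmemlam]
        constructor
        · rw [YoungDiagram.mem_cells, YoungDiagram.mem_iff_lt_rowLen]; omega
        · intro h
          have := (Prod.mk.injEq ..).mp h
          omega
  have hlrne : ∀ i, i ≠ r → lam.rowLen i = Λ.rowLen i := by
    intro i hi
    apply rowLen_eq_of
    · rw [← YoungDiagram.mem_cells, hmemlam]
      rintro ⟨h1, -⟩
      rw [YoungDiagram.mem_cells, YoungDiagram.mem_iff_lt_rowLen] at h1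
      omega
    · rcases Nat.eq_zero_or_pos (Λ.rowLen i) with h0 | hpos
      · exact Or.inl h0
      · refine Or.inr ?_
        rw [← YoungDiagram.mem_cells, hmemlam]
        constructor
        · rw [YoungDiagram.mem_cells, YoungDiagram.mem_iff_lt_rowLen]; omega
        · intro h
          have := (Prod.mk.injEq ..).mp h
          omega
  have hlc : lam.colLen c = r := by
    apply colLen_eq_of
    · rw [← YoungDiagram.mem_cells, hmemlam]
      tauto
    · rcases Nat.eq_zero_or_pos r with rfl | hr
      · exact Or.inl rfl
      · refine Or.inr ?_
        rw [← YoungDiagram.mem_cells, hmemlam]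
        constructor
        · rw [YoungDiagram.mem_cells, YoungDiagram.mem_iff_lt_colLen]; omega
        · intro h
          have := (Prod.mk.injEq ..).mp h
          omega
  have hlcne : ∀ j, j ≠ c → lam.colLen j = Λ.colLen j := by
    intro j hj
    apply colLen_eq_of
    · rw [← YoungDiagram.mem_cells, hmemlam]
      rintro ⟨h1, -⟩
      rw [YoungDiagram.mem_cells, YoungDiagram.mem_iff_lt_colLen] at h1
      omega
    · rcases Nat.eq_zero_or_pos (Λ.colLen j) with h0 | hpos
      · exact Or.inl h0
      · refine Or.inr ?_
        rw [← YoungDiagram.mem_cells, hmemlam]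
        constructor
        · rw [YoungDiagram.mem_cells, YoungDiagram.mem_iff_lt_colLen]; omega
        · intro h
          have := (Prod.mk.injEq ..).mp h
          omega
  -- hooks of lam along row r and column c
  have hcolge : ∀ j ≤ c, r + 1 ≤ Λ.colLen j := by
    intro j hj
    have := Λ.colLen_anti j c hj
    omega
  have hrowge : ∀ i ≤ r, c + 1 ≤ Λ.rowLen i := by
    intro i hi
    have := Λ.rowLen_anti i r hi
    omega
  have hhookrow : ∀ j < c, hookLen Λ (r, j) = hookLen lam (r, j) + 1 := by
    intro j hj
    have h1 := hlcne j (by omega)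
    have h2 := hcolge j (by omega)
    simp only [hookLen, armLen, legLen, hlr, hrow, h1]
    omega
  have hhookcol : ∀ i < r, hookLen Λ (i, c) = hookLen lam (i, c) + 1 := by
    intro i hi
    have h1 := hlrne i (by omega)
    have h2 := hrowge i (by omega)
    simp only [hookLen, armLen, legLen, hlc, hcol, h1]
    omega
  have hb0hook : hookLen Λ (r, c) = 1 := by
    simp only [hookLen, armLen, legLen]
    omega
  -- splitting the product over Λ
  have hsplit : ∏ b ∈ Λ.cells, (hookLen Λ b : ℝ) = ∏ b ∈ lam.cells, (hookLen Λ b : ℝ) := by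
    have h := Finset.mul_prod_erase Λ.cells (fun b => (hookLen Λ b : ℝ)) hmemb0
    rw [← h, hlam]
    simp [hb0hook]
  have hGne : ∀ (μ : YoungDiagram) (b : ℕ × ℕ), (hookLen μ b : ℝ) ≠ 0 := by
    intro μ b
    exact Nat.cast_ne_zero.mpr (by simp [hookLen])
  -- the boundary sets
  have hdisj : Disjoint ((Finset.range c).image fun j => (r, j))
      ((Finset.range r).image fun i => (i, c)) := by
    rw [Finset.disjoint_left]
    intro p hp hq
    rw [Finset.mem_image] at hp hq
    obtain ⟨j, hj, rfl⟩ := hp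
    obtain ⟨i, hi, hieq⟩ := hq
    rw [Finset.mem_range] at hj hi
    have := (Prod.mk.injEq ..).mp hieq
    omega
  have hratio : (∏ b ∈ Λ.cells, (hookLen Λ b : ℝ)) / ∏ b ∈ lam.cells, (hookLen lam b : ℝ)
      = (∏ j ∈ Finset.range c, ((hookLen Λ (r, j) : ℝ) / ((hookLen Λ (r, j) : ℝ) - 1))) *
        ∏ i ∈ Finset.range r, ((hookLen Λ (i, c) : ℝ) / ((hookLen Λ (i, c) : ℝ) - 1)) := by
    rw [hsplit, ← Finset.prod_div_distrib]
    have hsub : ((Finset.range c).image fun j => (r, j)) ∪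
        ((Finset.range r).image fun i => (i, c)) ⊆ lam.cells := by
      intro p hp
      rw [Finset.mem_union, Finset.mem_image, Finset.mem_image] at hp
      rcases hp with ⟨j, hj, rfl⟩ | ⟨i, hi, rfl⟩
      · rw [Finset.mem_range] at hj
        rw [hmemlam]
        constructor
        · rw [YoungDiagram.mem_cells, YoungDiagram.mem_iff_lt_rowLen]; omega
        · intro h; have := (Prod.mk.injEq ..).mp h; omega
      · rw [Finset.mem_range] at hi
        rw [hmemlam]
        constructor
        · rw [YoungDiagram.mem_cells, YoungDiagram.mem_iff_lt_colLen]; omega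
        · intro h; have := (Prod.mk.injEq ..).mp h; omega
    rw [← Finset.prod_subset hsub ?houter]
    case houter =>
      intro b hb hnb
      obtain ⟨i, j⟩ := b
      rw [Finset.mem_union, Finset.mem_image, Finset.mem_image] at hnb
      push_neg at hnb
      have hir : i ≠ r := by
        intro h
        have h1 : (i, j) ∈ lam := hb
        rw [YoungDiagram.mem_iff_lt_rowLen] at h1
        rw [h, hlr] at h1
        exact (hnb.1 j (Finset.mem_range.mpr h1)) (by rw [h])
      have hjc : j ≠ c := by
        intro h
        have h1 : (i, j) ∈ lam := hb
        rw [YoungDiagram.mem_iff_lt_colLen] at h1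
        rw [h, hlc] at h1
        exact (hnb.2 i (Finset.mem_range.mpr h1)) (by rw [h])
      have : hookLen Λ (i, j) = hookLen lam (i, j) := by
        simp only [hookLen, armLen, legLen, hlrne i hir, hlcne j hjc]
      rw [this, div_self (hGne lam (i, j))]
    rw [Finset.prod_union hdisj]
    congr 1
    · rw [Finset.prod_image (by intro a _ b _ h; exact ((Prod.mk.injEq ..).mp h).2)]
      refine Finset.prod_congr rfl (fun j hj => ?_)
      rw [Finset.mem_range] at hj
      have h := hhookrow j hj
      have hcast : (hookLen lam (r, j) : ℝ) = (hookLen Λ (r, j) : ℝ) - 1 := by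
        have := congrArg (Nat.cast : ℕ → ℝ) h
        push_cast at this
        linarith
      rw [hcast]
    · rw [Finset.prod_image (by intro a _ b _ h; exact ((Prod.mk.injEq ..).mp h).1)]
      refine Finset.prod_congr rfl (fun i hi => ?_)
      rw [Finset.mem_range] at hi
      have h := hhookcol i hi
      have hcast : (hookLen lam (i, c) : ℝ) = (hookLen Λ (i, c) : ℝ) - 1 := by
        have := congrArg (Nat.cast : ℕ → ℝ) h
        push_cast at this
        linarith
      rw [hcast]
  have Prow := row_lemma Λ r c hrow hcol d k hk1 hk2 x y hinter hx1 hx2 hy1 hy2 hyk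
  have Pcol := col_lemma Λ r c hrow hcol d k hk1 hk2 x y hinter hx1 hx2 hy1 hy2 hyk
  -- reindexing the target products
  have hA : ∏ i ∈ Finset.Icc 1 k, (y k - x i)
      = (y k - x 1) * ∏ i ∈ Finset.Icc 1 (k - 1), (y k - x (i + 1)) := by
    rw [← Finset.mul_prod_erase (Finset.Icc 1 k) _ (Finset.mem_Icc.mpr ⟨le_refl 1, hk1⟩)]
    congr 1
    refine Finset.prod_nbij' (fun m => m - 1) (fun m => m + 1) ?_ ?_ ?_ ?_ ?_ <;>
        intro a ha <;>
        simp only [Finset.mem_erase, Finset.mem_Icc] at ha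
    · simp only [Finset.mem_Icc]; omega
    · simp only [Finset.mem_erase, Finset.mem_Icc]; omega
    · omega
    · omega
    · rw [show a - 1 + 1 = a from by omega]
  have hC : ∏ i ∈ Finset.Icc (k + 1) d, (x i - y k)
      = (x d - y k) * ∏ i ∈ Finset.Icc (k + 1) (d - 1), (x i - y k) := by
    rw [← Finset.mul_prod_erase (Finset.Icc (k + 1) d) _
      (Finset.mem_Icc.mpr ⟨by omega, le_refl d⟩)]
    congr 1
    apply Finset.prod_congr
    · ext m
      rw [Finset.mem_erase, Finset.mem_Icc, Finset.mem_Icc]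
      omega
    · intro _ _; rfl
  have htail : ∏ j ∈ Finset.Icc (k + 1) (d - 1), (y k - x j) / (y k - y j)
      = ∏ j ∈ Finset.Icc (k + 1) (d - 1), (x j - y k) / (y j - y k) := by
    refine Finset.prod_congr rfl (fun j _ => ?_)
    rw [show y k - x j = -(x j - y k) by ring, show y k - y j = -(y j - y k) by ring,
      neg_div_neg_eq]
  have part1 : (∏ b ∈ Λ.cells, (hookLen Λ b : ℝ)) / ∏ b ∈ lam.cells, (hookLen lam b : ℝ) =
      (x d - y k) * (y k - x 1) *
        (∏ i ∈ Finset.Icc 1 (k - 1), (y k - x (i + 1)) / (y k - y i)) *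
        ∏ j ∈ Finset.Icc (k + 1) (d - 1), (y k - x j) / (y k - y j) := by
    rw [hratio, Prow, Pcol, htail, Finset.prod_div_distrib, Finset.prod_div_distrib, hA, hC]
    ring
  refine ⟨part1, ?_⟩
  -- second claim
  have hcardlam : lam.card = n - 1 := by
    unfold YoungDiagram.card
    rw [hlam, Finset.card_erase_of_mem hmemb0, hn]
  have hn1 : 1 ≤ n := by
    rw [hn]
    exact Finset.card_pos.mpr ⟨(r, c), hmemb0⟩
  have hfac : (Nat.factorial Λ.card : ℝ) = (n : ℝ) * (Nat.factorial lam.card : ℝ) := by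
    rw [hcardlam, ← hn]
    have h1 : n = (n - 1) + 1 := by omega
    rw [h1, Nat.factorial_succ]
    push_cast
    ring
  have hPF : (∏ b ∈ Λ.cells, (hookLen Λ b : ℝ)) ≠ 0 :=
    Finset.prod_ne_zero_iff.mpr (fun b _ => hGne Λ b)
  have hPG : (∏ b ∈ lam.cells, (hookLen lam b : ℝ)) ≠ 0 :=
    Finset.prod_ne_zero_iff.mpr (fun b _ => hGne lam b)
  have hnne : (n : ℝ) ≠ 0 := Nat.cast_ne_zero.mpr (by omega)
  have hfaclam : (Nat.factorial lam.card : ℝ) ≠ 0 := Nat.cast_ne_zero.mpr (Nat.factorial_ne_zero _)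
  have h2 : hookDim lam / hookDim Λ =
      ((∏ b ∈ Λ.cells, (hookLen Λ b : ℝ)) / ∏ b ∈ lam.cells, (hookLen lam b : ℝ)) / n := by
    unfold hookDim
    rw [Finset.prod_inv_distrib, Finset.prod_inv_distrib, hfac]
    field_simp
  rw [h2, part1]
  ring
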